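/- For the Thue–Morse word T, the 2-Abelian complexity satisfies ρ^{(2)}_T(2^m + 1) ≤ 8 for all m ≥ 0, and ρ^{(2)}_T(n) = O(log n). -/

import Mathlib

/-- Number of occurrences of `x` as a factor of `u`. -/
def occ {α : Type*} [DecidableEq α] (u x : List α) : ℕ :=
  ((List.range (u.length + 1)).filter (fun i => decide (x <+: u.drop i))).length

/-- `k`-Abelian equivalence: same number of occurrences of every word of length at most `k`. -/
def KAbEq {α : Type*} [DecidableEq α] (k : ℕ) (u v : List α) : Prop :=
  ∀ x : List α, x.length ≤ k → occ u x = occ v x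

/-- The factor of the infinite word `w` of length `n` starting at position `i`. -/
def factorAt {α : Type*} (w : ℕ → α) (i n : ℕ) : List α :=
  (List.range n).map (fun j => w (i + j))

/-- `k`-Abelian complexity: the number of `k`-Abelian classes of length-`n` factors of `w`. -/
noncomputable def rho {α : Type*} [DecidableEq α] (k : ℕ) (w : ℕ → α) (n : ℕ) : ℕ :=
  Set.ncard { C : Set (List α) | ∃ i : ℕ,
    C = { v | (∃ j : ℕ, v = factorAt w j n) ∧ KAbEq k v (factorAt w i n) } }


/-- number of `p ∈ [a,b)` with `P p`. -/
def cnt (P : ℕ → Bool) (a b : ℕ) : ℕ := (List.range' a (b - a)).countP P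

lemma cnt_of_le (P : ℕ → Bool) {a b : ℕ} (h : b ≤ a) : cnt P a b = 0 := by
  simp [cnt, Nat.sub_eq_zero_of_le h]

lemma cnt_succ (P : ℕ → Bool) {a b : ℕ} (h : a ≤ b) :
    cnt P a (b + 1) = cnt P a b + (if P b then 1 else 0) := by
  have h1 : b + 1 - a = (b - a) + 1 := by omega
  have h2 : a + (b - a) = b := by omega
  rw [cnt, cnt, h1, List.range'_1_concat, List.countP_append, h2]
  rcases hb : P b <;> simp [hb]

lemma cnt_le_len (P : ℕ → Bool) (a b : ℕ) : cnt P a b ≤ b - a := by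
  simpa [cnt] using (List.countP_le_length (l := List.range' a (b - a)) (p := P))

lemma cnt_congr {P Q : ℕ → Bool} (a b : ℕ) (h : ∀ p, P p = Q p) : cnt P a b = cnt Q a b := by
  have : P = Q := funext h
  rw [this]

lemma cnt_true (a b : ℕ) : cnt (fun _ => true) a b = b - a := by
  simp [cnt]

lemma cnt_not (P : ℕ → Bool) (a b : ℕ) : cnt (fun p => !P p) a b + cnt P a b = b - a := by
  have h := List.length_eq_countP_add_countP P (l := List.range' a (b-a))
  have h2 : (List.range' a (b-a)).countP (fun x => !P x)
      = (List.range' a (b-a)).countP (fun a => decide ¬P a = true) := by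
    apply List.countP_congr
    intro x _
    rcases hx : P x <;> simp [hx]
  rw [List.length_range'] at h
  simp only [cnt, h2]
  omega

/-- splitting a count according to a second predicate -/
lemma cnt_split (P Q : ℕ → Bool) (a b : ℕ) :
    cnt P a b = cnt (fun p => P p && Q p) a b + cnt (fun p => P p && !Q p) a b := by
  rcases le_or_gt a b with h | h
  · induction b, h using Nat.le_induction with
    | base => simp [cnt_of_le]
    | succ b hb ih =>
        rw [cnt_succ _ hb, cnt_succ _ hb, cnt_succ _ hb, ih]
        rcases h1 : P b <;> rcases h2 : Q b <;> simp [h1, h2] <;> omega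
  · simp [cnt_of_le _ (le_of_lt h)]

/-- shifting a window by one -/
lemma cnt_shift (P : ℕ → Bool) {a b : ℕ} (h : a ≤ b) :
    cnt P (a+1) (b+1) + (if P a then 1 else 0) = cnt P a b + (if P b then 1 else 0) := by
  have h1 : cnt P a (b+1) = cnt P a b + (if P b then 1 else 0) := cnt_succ P h
  have h2 : cnt P a (b+1) = (if P a then 1 else 0) + cnt P (a+1) (b+1) := by
    have h3 : b + 1 - a = (b + 1 - (a+1)) + 1 := by omega
    rw [cnt, h3, List.range'_succ, List.countP_cons]
    rcases ha : P a <;> simp [ha, cnt] <;> omega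
  omega

/-- telescoping: descents vs ascents -/
lemma cnt_tele (f : ℕ → Bool) {a b : ℕ} (h : a ≤ b) :
    cnt (fun p => f p && !f (p+1)) a b + (if f b then 1 else 0)
      = cnt (fun p => !f p && f (p+1)) a b + (if f a then 1 else 0) := by
  induction b, h using Nat.le_induction with
  | base => simp [cnt_of_le]
  | succ b hb ih =>
      rw [cnt_succ _ hb, cnt_succ _ hb]
      rcases h1 : f b <;> rcases h2 : f (b+1) <;> simp [h1, h2] at ih ⊢ <;> omega

/-- parity splitting of a count -/
lemma cnt_parity (P : ℕ → Bool) (a b : ℕ) :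
    cnt P a b = cnt (fun k => P (2*k)) ((a+1)/2) ((b+1)/2)
              + cnt (fun k => P (2*k+1)) (a/2) (b/2) := by
  rcases le_or_gt a b with h | h
  · induction b, h using Nat.le_induction with
    | base => simp [cnt_of_le]
    | succ b hb ih =>
        rw [cnt_succ _ hb, ih]
        rcases Nat.even_or_odd b with ⟨c, hc⟩ | ⟨c, hc⟩
        · have e1 : (b+1+1)/2 = c + 1 := by omega
          have e2 : (b+1)/2 = c := by omega
          have e3 : b/2 = c := by omega
          have e4 : (a+1)/2 ≤ c := by omega
          have e5 : 2 * c = b := by omega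
          rw [e1, e2, e3, cnt_succ _ e4, e5]
          omega
        · have e1 : (b+1+1)/2 = (b+1)/2 := by omega
          have e2 : (b+1)/2 = c + 1 := by omega
          have e3 : b/2 = c := by omega
          have e4 : a/2 ≤ c := by omega
          have e5 : 2 * c + 1 = b := by omega
          rw [e1, e2, e3, cnt_succ _ e4, e5]
          omega
  · rw [cnt_of_le _ (le_of_lt h), cnt_of_le, cnt_of_le] <;> omega

section OccBridge

lemma factorAt_length {α : Type*} (w : ℕ → α) (i n : ℕ) : (factorAt w i n).length = n := by
  simp [factorAt]

lemma factorAt_drop {α : Type*} (w : ℕ → α) (i n j : ℕ) :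
    (factorAt w i n).drop j = factorAt w (i+j) (n-j) := by
  apply List.ext_getElem
  · simp [factorAt]
  · intro k h1 h2
    simp only [factorAt] at *
    rw [List.getElem_drop]
    simp only [factorAt, List.getElem_map, List.getElem_range]
    congr 1
    omega

lemma factorAt_cons {α : Type*} (w : ℕ → α) (a : ℕ) {n : ℕ} (h : 0 < n) :
    factorAt w a n = w a :: factorAt w (a+1) (n-1) := by
  obtain ⟨m, rfl⟩ : ∃ m, n = m + 1 := ⟨n - 1, by omega⟩
  simp only [factorAt, List.range_succ_eq_map, List.map_cons, List.map_map, Nat.add_sub_cancel,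
    Nat.add_zero]
  congr 1
  apply List.map_congr_left
  intro j _
  simp [Function.comp]
  congr 1
  omega

lemma prefix_one {α : Type*} (w : ℕ → α) (x : α) (a m : ℕ) :
    [x] <+: factorAt w a m ↔ (1 ≤ m ∧ w a = x) := by
  rcases Nat.eq_zero_or_pos m with rfl | hm
  · simp [factorAt]
  · rw [factorAt_cons w a hm]
    simp [List.cons_prefix_cons, eq_comm]
    try omega

lemma prefix_two {α : Type*} (w : ℕ → α) (x y : α) (a m : ℕ) :
    [x, y] <+: factorAt w a m ↔ (2 ≤ m ∧ w a = x ∧ w (a+1) = y) := by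
  rcases Nat.eq_zero_or_pos m with rfl | hm
  · simp [factorAt]
  · rw [factorAt_cons w a hm]
    rcases Nat.eq_zero_or_pos (m-1) with h1 | h1
    · have : m = 1 := by omega
      subst this
      simp [factorAt, List.cons_prefix_cons]
      try omega
    · rw [factorAt_cons w (a+1) h1]
      simp [List.cons_prefix_cons, eq_comm]
      try omega

lemma countP_range_guard {N K : ℕ} (q : ℕ → Bool) (hK : K ≤ N) :
    (List.range N).countP (fun j => decide (j < K) && q j) = (List.range K).countP q := by
  induction N, hK using Nat.le_induction with
  | base =>
      apply List.countP_congr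
      intro j hj
      simp at hj
      simp [hj]
  | succ N hN ih =>
      rw [List.range_succ, List.countP_append, ih]
      have : ¬ (N < K) := by omega
      simp [this]

lemma occ_countP {α : Type*} [DecidableEq α] (u x : List α) :
    occ u x = (List.range (u.length + 1)).countP (fun i => decide (x <+: u.drop i)) := by
  simp [occ, List.countP_eq_length_filter]

lemma occ_nil {α : Type*} [DecidableEq α] (u : List α) : occ u ([] : List α) = u.length + 1 := by
  rw [occ_countP]
  have h : ∀ a ∈ List.range (u.length + 1), (fun i => decide (([] : List α) <+: u.drop i)) a = true := by
    intro a _; simp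
  rw [List.countP_eq_length.2 h, List.length_range]

lemma range'_countP_eq (P : ℕ → Bool) (i n : ℕ) :
    cnt P i (i + n) = (List.range n).countP (fun j => P (i + j)) := by
  rw [cnt, Nat.add_sub_cancel_left, List.range'_eq_map_range, List.countP_map]
  rfl

lemma occ_one (T : ℕ → Bool) (x : Bool) (i n : ℕ) :
    occ (factorAt T i n) [x] = cnt (fun p => T p == x) i (i + n) := by
  rw [occ_countP, factorAt_length, range'_countP_eq]
  have h1 : ∀ j ∈ List.range (n+1),
      ((fun j => decide ([x] <+: (factorAt T i n).drop j)) j = true)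
        ↔ ((fun j => decide (j < n) && (T (i + j) == x)) j = true) := by
    intro j _
    simp only [factorAt_drop, prefix_one, decide_eq_true_eq, Bool.and_eq_true, beq_iff_eq]
    constructor
    · rintro ⟨h2, h3⟩; exact ⟨by omega, h3⟩
    · rintro ⟨h2, h3⟩; exact ⟨by omega, h3⟩
  rw [List.countP_congr h1, countP_range_guard _ (by omega)]

lemma occ_two (T : ℕ → Bool) (x y : Bool) (i n : ℕ) :
    occ (factorAt T i n) [x, y]
      = cnt (fun p => T p == x && T (p+1) == y) i (i + (n - 1)) := by
  rw [occ_countP, factorAt_length, range'_countP_eq]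
  have h1 : ∀ j ∈ List.range (n+1),
      ((fun j => decide ([x, y] <+: (factorAt T i n).drop j)) j = true)
        ↔ ((fun j => decide (j < n - 1) && (T (i + j) == x && (T (i + j + 1) == y))) j = true) := by
    intro j _
    simp only [factorAt_drop, prefix_two, decide_eq_true_eq, Bool.and_eq_true, beq_iff_eq]
    constructor
    · rintro ⟨h2, h3, h4⟩; exact ⟨by omega, h3, h4⟩
    · rintro ⟨h2, h3, h4⟩; refine ⟨by omega, h3, ?_⟩
      convert h4 using 2
      try omega
  rw [List.countP_congr h1, countP_range_guard _ (by omega)]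

end OccBridge

section Scaffold

/-- pair count -/
def pc (T : ℕ → Bool) (x y : Bool) (a b : ℕ) : ℕ :=
  cnt (fun p => T p == x && T (p+1) == y) a b

/-- the signature tuple of the factor of length `n` at position `i` -/
def gtuple (T : ℕ → Bool) (n i : ℕ) : Bool × Bool × ℕ × ℕ × ℕ × ℕ :=
  (T i, T (i + (n-1)), pc T false false i (i+(n-1)), pc T false true i (i+(n-1)),
    pc T true false i (i+(n-1)), pc T true true i (i+(n-1)))

lemma words_le_two (x : List Bool) (hx : x.length ≤ 2) :
    x = [] ∨ x = [false] ∨ x = [true] ∨ x = [false, false] ∨ x = [false, true]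
      ∨ x = [true, false] ∨ x = [true, true] := by
  rcases x with _ | ⟨a, _ | ⟨b, _ | ⟨c, t⟩⟩⟩
  · tauto
  · rcases a <;> tauto
  · rcases a <;> rcases b <;> tauto
  · simp at hx

lemma lc_split (T : ℕ → Bool) (x : Bool) (a b : ℕ) :
    cnt (fun p => T p == x) a b = pc T x false a b + pc T x true a b := by
  rw [cnt_split (fun p => T p == x) (fun p => T (p+1) == false) a b]
  unfold pc
  congr 1
  · apply cnt_congr
    intro p
    rcases h1 : T (p+1) <;> simp [h1]

lemma occ_one_pc (T : ℕ → Bool) (x : Bool) (i : ℕ) {n : ℕ} (hn : 1 ≤ n) :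
    occ (factorAt T i n) [x]
      = pc T x false i (i+(n-1)) + pc T x true i (i+(n-1))
        + (if T (i+(n-1)) == x then 1 else 0) := by
  rw [occ_one]
  have h1 : i + n = (i + (n-1)) + 1 := by omega
  rw [h1, cnt_succ _ (by omega), lc_split]

/-- the signature tuple determines the 2-abelian class -/
lemma det (T : ℕ → Bool) {n : ℕ} (hn : 1 ≤ n) (i j : ℕ)
    (h : gtuple T n i = gtuple T n j) :
    KAbEq 2 (factorAt T i n) (factorAt T j n) := by
  simp only [gtuple, Prod.mk.injEq] at h
  obtain ⟨h1, h2, h3, h4, h5, h6⟩ := h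
  intro x hx
  rcases words_le_two x hx with rfl | rfl | rfl | rfl | rfl | rfl | rfl
  · rw [occ_nil, occ_nil, factorAt_length, factorAt_length]
  · rw [occ_one_pc T _ _ hn, occ_one_pc T _ _ hn, h2, h3, h4]
  · rw [occ_one_pc T _ _ hn, occ_one_pc T _ _ hn, h2, h5, h6]
  · rw [occ_two, occ_two]; exact h3
  · rw [occ_two, occ_two]; exact h4
  · rw [occ_two, occ_two]; exact h5
  · rw [occ_two, occ_two]; exact h6

def classOf (T : ℕ → Bool) (n i : ℕ) : Set (List Bool) :=
  { v | (∃ j : ℕ, v = factorAt T j n) ∧ KAbEq 2 v (factorAt T i n) }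

lemma rho_eq_range (T : ℕ → Bool) (n : ℕ) :
    rho 2 T n = (Set.range (classOf T n)).ncard := by
  unfold rho classOf
  congr 1
  ext C
  constructor
  · rintro ⟨i, rfl⟩; exact ⟨i, rfl⟩
  · rintro ⟨i, rfl⟩; exact ⟨i, rfl⟩

lemma classOf_congr (T : ℕ → Bool) (n i j : ℕ)
    (h : KAbEq 2 (factorAt T i n) (factorAt T j n)) : classOf T n i = classOf T n j := by
  unfold classOf
  ext v
  simp only [Set.mem_setOf_eq, and_congr_right_iff]
  intro _
  constructor
  · intro hv x hx; rw [hv x hx, h x hx]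
  · intro hv x hx; rw [hv x hx, h x hx]

lemma ncard_range_le {α β : Type*} (f : ℕ → α) (g : ℕ → β)
    (h : ∀ i j, g i = g j → f i = f j) (F : Finset β) (hg : ∀ i, g i ∈ F) :
    (Set.range f).ncard ≤ F.card := by
  classical
  have hfin : (Set.range g).Finite :=
    Set.Finite.subset F.finite_toSet (by rintro _ ⟨i, rfl⟩; exact hg i)
  set H : β → α := fun y => if hy : ∃ i, g i = y then f hy.choose else f 0 with hH
  have hsub : Set.range f ⊆ H '' Set.range g := by
    rintro _ ⟨i, rfl⟩
    refine ⟨g i, ⟨i, rfl⟩, ?_⟩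
    have hy : ∃ k, g k = g i := ⟨i, rfl⟩
    simp only [hH, dif_pos hy]
    exact h _ _ hy.choose_spec
  calc (Set.range f).ncard ≤ (H '' Set.range g).ncard :=
        Set.ncard_le_ncard hsub (hfin.image H)
    _ ≤ (Set.range g).ncard := Set.ncard_image_le hfin
    _ ≤ (↑F : Set β).ncard :=
        Set.ncard_le_ncard (by rintro _ ⟨i, rfl⟩; exact hg i) F.finite_toSet
    _ = F.card := Set.ncard_coe_finset F

/-- main counting principle -/
lemma rho_le {β : Type*} (T : ℕ → Bool) {n : ℕ} (hn : 1 ≤ n) (g : ℕ → β)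
    (hdet : ∀ i j, g i = g j → gtuple T n i = gtuple T n j)
    (F : Finset β) (hg : ∀ i, g i ∈ F) : rho 2 T n ≤ F.card := by
  rw [rho_eq_range]
  exact ncard_range_le (classOf T n) g
    (fun i j hij => classOf_congr T n i j (det T hn i j (hdet i j hij))) F hg

end Scaffold

section TMrec

variable (T : ℕ → Bool) (hTe : ∀ n, T (2 * n) = T n) (hTo : ∀ n, T (2 * n + 1) = !T n)

lemma cnt_false (a b : ℕ) : cnt (fun _ => false) a b = 0 := by simp [cnt]

lemma cnt_one (P : ℕ → Bool) (a : ℕ) : cnt P a (a+1) = if P a then 1 else 0 := by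
  rw [cnt_succ P (le_refl a), cnt_of_le P (le_refl a), Nat.zero_add]

include hTe hTo

lemma pc_ff (a b : ℕ) : pc T false false a b = pc T true false (a/2) (b/2) := by
  unfold pc
  rw [cnt_parity]
  have h1 : cnt (fun k => T (2*k) == false && T (2*k+1) == false) ((a+1)/2) ((b+1)/2) = 0 := by
    rw [cnt_congr _ _ (Q := fun _ => false) ?_, cnt_false]
    intro k
    rw [hTe k, hTo k]
    rcases h : T k <;> simp [h]
  rw [h1, Nat.zero_add]
  apply cnt_congr
  intro k
  have h2 : T (2*k+1+1) = T (k+1) := by rw [show 2*k+1+1 = 2*(k+1) by ring, hTe]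
  rw [hTo k, h2]
  rcases h : T k <;> simp [h]

lemma pc_tt (a b : ℕ) : pc T true true a b = pc T false true (a/2) (b/2) := by
  unfold pc
  rw [cnt_parity]
  have h1 : cnt (fun k => T (2*k) == true && T (2*k+1) == true) ((a+1)/2) ((b+1)/2) = 0 := by
    rw [cnt_congr _ _ (Q := fun _ => false) ?_, cnt_false]
    intro k
    rw [hTe k, hTo k]
    rcases h : T k <;> simp [h]
  rw [h1, Nat.zero_add]
  apply cnt_congr
  intro k
  have h2 : T (2*k+1+1) = T (k+1) := by rw [show 2*k+1+1 = 2*(k+1) by ring, hTe]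
  rw [hTo k, h2]
  rcases h : T k <;> simp [h]

lemma pc_ft (a b : ℕ) : pc T false true a b
    = cnt (fun k => T k == false) ((a+1)/2) ((b+1)/2) + pc T true true (a/2) (b/2) := by
  unfold pc
  rw [cnt_parity]
  congr 1
  · apply cnt_congr
    intro k
    rw [hTe k, hTo k]
    rcases h : T k <;> simp [h]
  · apply cnt_congr
    intro k
    have h2 : T (2*k+1+1) = T (k+1) := by rw [show 2*k+1+1 = 2*(k+1) by ring, hTe]
    rw [hTo k, h2]
    rcases h : T k <;> simp [h]

lemma pc_tf (a b : ℕ) : pc T true false a b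
    = cnt (fun k => T k == true) ((a+1)/2) ((b+1)/2) + pc T false false (a/2) (b/2) := by
  unfold pc
  rw [cnt_parity]
  congr 1
  · apply cnt_congr
    intro k
    rw [hTe k, hTo k]
    rcases h : T k <;> simp [h]
  · apply cnt_congr
    intro k
    have h2 : T (2*k+1+1) = T (k+1) := by rw [show 2*k+1+1 = 2*(k+1) by ring, hTe]
    rw [hTo k, h2]
    rcases h : T k <;> simp [h]

end TMrec

section Part1

def shpO (a b : ℕ) : Finset (Bool × Bool × ℕ × ℕ × ℕ × ℕ) :=
  {(false,false,a,b,b,a),(true,true,a,b,b,a),(false,true,a,b,b-1,a+1),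
   (false,true,a+1,b,b-1,a),(true,false,a,b-1,b,a+1),(true,false,a+1,b-1,b,a)}

def shpE (a b : ℕ) : Finset (Bool × Bool × ℕ × ℕ × ℕ × ℕ) :=
  {(false,false,a,b,b,a),(true,true,a,b,b,a),(false,true,a-1,b+1,b,a),
   (false,true,a,b+1,b,a-1),(true,false,a-1,b,b+1,a),(true,false,a,b,b+1,a-1)}

def pj : ℕ → ℕ × ℕ
  | 0 => (0, 1)
  | k+1 => ((pj k).2, 2*(pj k).1 + (pj k).2)

lemma pj_facts : ∀ k, 1 ≤ (pj k).2 ∧ (k % 2 = 1 → 1 ≤ (pj k).1) := by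
  intro k
  induction k with
  | zero => simp [pj]
  | succ k ih =>
      obtain ⟨h1, _⟩ := ih
      refine ⟨by simp [pj]; omega, fun _ => by simp [pj]; omega⟩

section CH

variable (T : ℕ → Bool) (hTe : ∀ n, T (2 * n) = T n) (hTo : ∀ n, T (2 * n + 1) = !T n)

include hTe hTo

lemma ch_even (u v : ℕ) :
    pc T false false (2*u) (2*v) = pc T true false u v
  ∧ pc T false true (2*u) (2*v) = (pc T false false u v + pc T false true u v) + pc T true true u v
  ∧ pc T true false (2*u) (2*v) = (pc T true false u v + pc T true true u v) + pc T false false u v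
  ∧ pc T true true (2*u) (2*v) = pc T false true u v := by
  have d1 : (2*u)/2 = u := by omega
  have d2 : (2*v)/2 = v := by omega
  have d3 : (2*u+1)/2 = u := by omega
  have d4 : (2*v+1)/2 = v := by omega
  refine ⟨?_, ?_, ?_, ?_⟩
  · rw [pc_ff T hTe hTo, d1, d2]
  · rw [pc_ft T hTe hTo, d1, d2, d3, d4, lc_split]
  · rw [pc_tf T hTe hTo, d1, d2, d3, d4, lc_split]
  · rw [pc_tt T hTe hTo, d1, d2]

lemma ch_odd {u v : ℕ} (huv : u ≤ v) :
    pc T false false (2*u+1) (2*v+1) = pc T true false u v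
  ∧ pc T false true (2*u+1) (2*v+1) + (if T u == false then 1 else 0)
      = ((pc T false false u v + pc T false true u v) + pc T true true u v)
        + (if T v == false then 1 else 0)
  ∧ pc T true false (2*u+1) (2*v+1) + (if T u == true then 1 else 0)
      = ((pc T true false u v + pc T true true u v) + pc T false false u v)
        + (if T v == true then 1 else 0)
  ∧ pc T true true (2*u+1) (2*v+1) = pc T false true u v := by
  have d1 : (2*u+1)/2 = u := by omega
  have d2 : (2*v+1)/2 = v := by omega
  have d3 : (2*u+1+1)/2 = u+1 := by omega
  have d4 : (2*v+1+1)/2 = v+1 := by omega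
  refine ⟨?_, ?_, ?_, ?_⟩
  · rw [pc_ff T hTe hTo, d1, d2]
  · rw [pc_ft T hTe hTo, d1, d2, d3, d4]
    have hs2 := cnt_shift (fun p => T p == false) huv
    have hl : cnt (fun p => T p == false) u v
        = pc T false false u v + pc T false true u v := lc_split T false u v
    omega
  · rw [pc_tf T hTe hTo, d1, d2, d3, d4]
    have hs2 := cnt_shift (fun p => T p == true) huv
    have hl : cnt (fun p => T p == true) u v
        = pc T true false u v + pc T true true u v := lc_split T true u v
    omega
  · rw [pc_tt T hTe hTo, d1, d2]

lemma ch_letters (u : ℕ) :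
    T (2*u) = T u ∧ T (2*u+1) = !T u := ⟨hTe u, hTo u⟩

/-- the main structural induction for part 1 -/
lemma main1 : ∀ k i,
    (T i, T (i + 2^(k+1)), pc T false false i (i + 2^(k+1)), pc T false true i (i + 2^(k+1)),
      pc T true false i (i + 2^(k+1)), pc T true true i (i + 2^(k+1)))
      ∈ (if k % 2 = 0 then shpO (pj k).1 (pj k).2 else shpE (pj k).1 (pj k).2) := by
  intro k
  induction k with
  | zero =>
      intro i
      obtain ⟨u, hu | hu⟩ := Nat.even_or_odd' i
      · subst hu
        have hw : 2*u + 2^(0+1) = 2*(u+1) := by norm_num; omega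
        rw [hw]
        obtain ⟨e00, e01, e10, e11⟩ := ch_even T hTe hTo u (u+1)
        rw [e00, e01, e10, e11, hTe u, hTe (u+1)]
        have c1 := cnt_one (fun p => T p == true && T (p+1) == false) u
        have c2 := cnt_one (fun p => T p == false && T (p+1) == false) u
        have c3 := cnt_one (fun p => T p == false && T (p+1) == true) u
        have c4 := cnt_one (fun p => T p == true && T (p+1) == true) u
        simp only [pc]
        rcases h1 : T u <;> rcases h2 : T (u+1) <;>
          simp [h1, h2] at c1 c2 c3 c4 <;>
          simp [shpO, pj, c1, c2, c3, c4, h1, h2]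
      · subst hu
        have hw : 2*u + 1 + 2^(0+1) = 2*(u+1) + 1 := by norm_num; omega
        rw [hw]
        obtain ⟨e00, e01, e10, e11⟩ := ch_odd T hTe hTo (Nat.le_succ u)
        rw [e00, e11, hTo u, hTo (u+1)]
        have c1 := cnt_one (fun p => T p == true && T (p+1) == false) u
        have c2 := cnt_one (fun p => T p == false && T (p+1) == false) u
        have c3 := cnt_one (fun p => T p == false && T (p+1) == true) u
        have c4 := cnt_one (fun p => T p == true && T (p+1) == true) u
        simp only [pc] at *
        rcases h1 : T u <;> rcases h2 : T (u+1) <;>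
          simp [h1, h2] at c1 c2 c3 c4 e01 e10 <;>
          simp [shpO, pj, c1, c2, c3, c4, h1, h2, e01, e10] <;>
          omega
  | succ k ih =>
      intro i
      have hpj := pj_facts k
      have hpar : (k+1) % 2 = 0 ∨ (k+1) % 2 = 1 := by omega
      obtain ⟨u, hu | hu⟩ := Nat.even_or_odd' i
      · subst hu
        have hw : 2*u + 2^(k+1+1) = 2*(u + 2^(k+1)) := by rw [pow_succ]; ring
        rw [hw]
        obtain ⟨e00, e01, e10, e11⟩ := ch_even T hTe hTo u (u + 2^(k+1))
        rw [e00, e01, e10, e11, hTe u, hTe (u + 2^(k+1))]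
        have hiu := ih u
        rcases Nat.even_or_odd k with hk | hk
        · have hk0 : k % 2 = 0 := Nat.even_iff.1 hk
          have hk1 : (k+1) % 2 = 1 := by omega
          rw [if_pos hk0] at hiu
          rw [if_neg (by omega)]
          simp only [shpO, Finset.mem_insert, Finset.mem_singleton, Prod.mk.injEq] at hiu
          simp only [shpE, pj, Finset.mem_insert, Finset.mem_singleton, Prod.mk.injEq]
          rcases hiu with ⟨f1,f2,f3,f4,f5,f6⟩|⟨f1,f2,f3,f4,f5,f6⟩|⟨f1,f2,f3,f4,f5,f6⟩|
            ⟨f1,f2,f3,f4,f5,f6⟩|⟨f1,f2,f3,f4,f5,f6⟩|⟨f1,f2,f3,f4,f5,f6⟩ <;>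
            rw [f1, f2, f3, f4, f5, f6] <;> simp <;> omega
        · have hk0 : k % 2 = 1 := Nat.odd_iff.1 hk
          have hA : 1 ≤ (pj k).1 := hpj.2 hk0
          rw [if_neg (by omega)] at hiu
          rw [if_pos (by omega)]
          simp only [shpE, Finset.mem_insert, Finset.mem_singleton, Prod.mk.injEq] at hiu
          simp only [shpO, pj, Finset.mem_insert, Finset.mem_singleton, Prod.mk.injEq]
          rcases hiu with ⟨f1,f2,f3,f4,f5,f6⟩|⟨f1,f2,f3,f4,f5,f6⟩|⟨f1,f2,f3,f4,f5,f6⟩|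
            ⟨f1,f2,f3,f4,f5,f6⟩|⟨f1,f2,f3,f4,f5,f6⟩|⟨f1,f2,f3,f4,f5,f6⟩ <;>
            rw [f1, f2, f3, f4, f5, f6] <;> simp <;> omega
      · subst hu
        have hw : 2*u + 1 + 2^(k+1+1) = 2*(u + 2^(k+1)) + 1 := by rw [pow_succ]; ring
        rw [hw]
        obtain ⟨e00, e01, e10, e11⟩ := ch_odd T hTe hTo (Nat.le_add_right u (2^(k+1)))
        rw [e00, e11, hTo u, hTo (u + 2^(k+1))]
        have hiu := ih u
        rcases Nat.even_or_odd k with hk | hk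
        · have hk0 : k % 2 = 0 := Nat.even_iff.1 hk
          rw [if_pos hk0] at hiu
          rw [if_neg (by omega)]
          simp only [shpO, Finset.mem_insert, Finset.mem_singleton, Prod.mk.injEq] at hiu
          simp only [shpE, pj, Finset.mem_insert, Finset.mem_singleton, Prod.mk.injEq]
          rcases hiu with ⟨f1,f2,f3,f4,f5,f6⟩|⟨f1,f2,f3,f4,f5,f6⟩|⟨f1,f2,f3,f4,f5,f6⟩|
            ⟨f1,f2,f3,f4,f5,f6⟩|⟨f1,f2,f3,f4,f5,f6⟩|⟨f1,f2,f3,f4,f5,f6⟩ <;>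
            rw [f1, f2, f3, f4, f6] at e01 <;> rw [f1, f2, f3, f5, f6] at e10 <;>
            rw [f1, f2, f4, f5] <;>
            (try simp at e01 e10) <;> (try simp) <;> omega
        · have hk0 : k % 2 = 1 := Nat.odd_iff.1 hk
          have hA : 1 ≤ (pj k).1 := hpj.2 hk0
          rw [if_neg (by omega)] at hiu
          rw [if_pos (by omega)]
          simp only [shpE, Finset.mem_insert, Finset.mem_singleton, Prod.mk.injEq] at hiu
          simp only [shpO, pj, Finset.mem_insert, Finset.mem_singleton, Prod.mk.injEq]
          rcases hiu with ⟨f1,f2,f3,f4,f5,f6⟩|⟨f1,f2,f3,f4,f5,f6⟩|⟨f1,f2,f3,f4,f5,f6⟩|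
            ⟨f1,f2,f3,f4,f5,f6⟩|⟨f1,f2,f3,f4,f5,f6⟩|⟨f1,f2,f3,f4,f5,f6⟩ <;>
            rw [f1, f2, f3, f4, f6] at e01 <;> rw [f1, f2, f3, f5, f6] at e10 <;>
            rw [f1, f2, f4, f5] <;>
            (try simp at e01 e10) <;> (try simp) <;> omega

end CH

end Part1

section Part1End

lemma card_shpO_le (a b : ℕ) : (shpO a b).card ≤ 6 := by
  unfold shpO
  refine (Finset.card_insert_le _ _).trans (Nat.succ_le_succ ?_)
  refine (Finset.card_insert_le _ _).trans (Nat.succ_le_succ ?_)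
  refine (Finset.card_insert_le _ _).trans (Nat.succ_le_succ ?_)
  refine (Finset.card_insert_le _ _).trans (Nat.succ_le_succ ?_)
  refine (Finset.card_insert_le _ _).trans (Nat.succ_le_succ ?_)
  exact (Finset.card_singleton _).le

lemma card_shpE_le (a b : ℕ) : (shpE a b).card ≤ 6 := by
  unfold shpE
  refine (Finset.card_insert_le _ _).trans (Nat.succ_le_succ ?_)
  refine (Finset.card_insert_le _ _).trans (Nat.succ_le_succ ?_)
  refine (Finset.card_insert_le _ _).trans (Nat.succ_le_succ ?_)
  refine (Finset.card_insert_le _ _).trans (Nat.succ_le_succ ?_)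
  refine (Finset.card_insert_le _ _).trans (Nat.succ_le_succ ?_)
  exact (Finset.card_singleton _).le

lemma part1 (T : ℕ → Bool) (hTe : ∀ n, T (2 * n) = T n) (hTo : ∀ n, T (2 * n + 1) = !T n)
    (m : ℕ) : rho 2 T (2^m + 1) ≤ 8 := by
  rcases m with _ | k
  · -- m = 0, length-2 factors
    have hF : ∀ i, gtuple T (2^0+1) i ∈
        ({(false,false,1,0,0,0),(false,true,0,1,0,0),
          (true,false,0,0,1,0),(true,true,0,0,0,1)} : Finset (Bool×Bool×ℕ×ℕ×ℕ×ℕ)) := by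
      intro i
      have c1 := cnt_one (fun p => T p == false && T (p+1) == false) i
      have c2 := cnt_one (fun p => T p == false && T (p+1) == true) i
      have c3 := cnt_one (fun p => T p == true && T (p+1) == false) i
      have c4 := cnt_one (fun p => T p == true && T (p+1) == true) i
      have hw : 2^0 + 1 - 1 = 1 := rfl
      simp only [gtuple, pc, hw]
      rcases h1 : T i <;> rcases h2 : T (i+1) <;>
        simp [h1, h2] at c1 c2 c3 c4 <;>
        simp [h1, h2, c1, c2, c3, c4]
    refine le_trans (rho_le T (by norm_num) (gtuple T (2^0+1)) (fun i j h => h) _ hF) ?_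
    decide
  · -- m = k+1
    have hF : ∀ i, gtuple T (2^(k+1)+1) i ∈
        (if k % 2 = 0 then shpO (pj k).1 (pj k).2 else shpE (pj k).1 (pj k).2) := by
      intro i
      have h := main1 T hTe hTo k i
      simpa only [gtuple, Nat.add_sub_cancel] using h
    refine le_trans (rho_le T (by have := Nat.one_le_two_pow (n := k+1); omega) (gtuple T (2^(k+1)+1)) (fun i j h => h) _ hF) ?_
    split_ifs
    · exact (card_shpO_le _ _).trans (by norm_num)
    · exact (card_shpE_le _ _).trans (by norm_num)

end Part1End

section Part2A

def mu : ℕ → ℕ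
  | 0 => 0
  | 1 => 1
  | (n+2) => (n+2) - mu ((n+3)/2)
decreasing_by omega

lemma mu_le : ∀ n, mu n ≤ n := by
  intro n
  match n with
  | 0 => simp [mu]
  | 1 => simp [mu]
  | (n+2) => rw [mu]; omega

lemma mu_eq {n : ℕ} (h : 2 ≤ n) : mu n + mu ((n+1)/2) = n := by
  obtain ⟨m, rfl⟩ : ∃ m, n = m + 2 := ⟨n - 2, by omega⟩
  have h1 : (m + 2 + 1)/2 = (m+3)/2 := by norm_num
  rw [mu, h1]
  have h2 := mu_le ((m+3)/2)
  omega

lemma mu_lip : ∀ n, mu n ≤ mu (n+1) ∧ mu (n+1) ≤ mu n + 1 := by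
  intro n
  induction n using Nat.strong_induction_on with
  | _ n ih =>
    match n with
    | 0 => simp [mu]
    | 1 => have : mu 2 = 1 := by rw [mu]; norm_num [mu]
           simp [mu, this]
    | (m+2) =>
      show mu (m+2) ≤ mu (m+3) ∧ mu (m+3) ≤ mu (m+2) + 1
      have e1 := mu_eq (n := m+2) (by omega)
      have e2 := mu_eq (n := m+3) (by omega)
      have hc : (m+3)/2 < m + 2 := by omega
      have hle1 := mu_le ((m+2+1)/2)
      have hle2 := mu_le ((m+3+1)/2)
      rcases Nat.even_or_odd m with ⟨c, hm⟩ | ⟨c, hm⟩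
      · -- m even: (m+3)/2 = c+1, (m+4)/2 = c+2 : differ
        have d1 : (m+2+1)/2 = c+1 := by omega
        have d2 : (m+3+1)/2 = c+2 := by omega
        have ihc : mu (c+1) ≤ mu (c+2) ∧ mu (c+2) ≤ mu (c+1) + 1 := by
          have := ih (c+1) (by omega)
          rwa [show c+1+1 = c+2 by ring] at this
        rw [d1] at e1 hle1
        rw [d2] at e2 hle2
        omega
      · -- m odd: (m+3)/2 = (m+4)/2
        have d1 : (m+2+1)/2 = c+2 := by omega
        have d2 : (m+3+1)/2 = c+2 := by omega
        rw [d1] at e1 hle1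
        rw [d2] at e2 hle2
        omega

lemma mu_mono : ∀ {k l : ℕ}, k ≤ l → mu k ≤ mu l := by
  intro k l h
  induction l, h using Nat.le_induction with
  | base => exact le_refl _
  | succ l hl ih => exact le_trans ih (mu_lip l).1

/-- count of "unequal adjacent pairs" predicate -/
def ne2 (T : ℕ → Bool) : ℕ → Bool := fun p => T p != T (p+1)

lemma uu_rec (T : ℕ → Bool) (hTe : ∀ n, T (2 * n) = T n) (hTo : ∀ n, T (2 * n + 1) = !T n)
    {a b : ℕ} (h : a ≤ b) :
    cnt (ne2 T) a b + cnt (ne2 T) (a/2) (b/2) = b - a := by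
  have hp := cnt_parity (ne2 T) a b
  have he : cnt (fun k => ne2 T (2*k)) ((a+1)/2) ((b+1)/2) = (b+1)/2 - (a+1)/2 := by
    rw [cnt_congr _ _ (Q := fun _ => true) ?_, cnt_true]
    intro k
    simp only [ne2]
    rw [hTe k, hTo k]
    rcases hk : T k <;> simp [hk]
  have ho : cnt (fun k => ne2 T (2*k+1)) (a/2) (b/2) + cnt (ne2 T) (a/2) (b/2) = b/2 - a/2 := by
    rw [cnt_congr _ _ (Q := fun k => !(ne2 T k)) ?_]
    · exact cnt_not (ne2 T) (a/2) (b/2)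
    · intro k
      simp only [ne2]
      have h2 : T (2*k+1+1) = T (k+1) := by rw [show 2*k+1+1 = 2*(k+1) by ring, hTe]
      rw [hTo k, h2]
      rcases hk : T k <;> rcases hk2 : T (k+1) <;> simp [hk, hk2]
  have hlen := cnt_le_len (ne2 T) (a/2) (b/2)
  omega

/-- two-sided logarithmic bound for the unequal-pair count -/
lemma ubound (T : ℕ → Bool) (hTe : ∀ n, T (2 * n) = T n) (hTo : ∀ n, T (2 * n + 1) = !T n) :
    ∀ L a, mu L ≤ cnt (ne2 T) a (a+L) + (Nat.log 2 L + 1)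
      ∧ cnt (ne2 T) a (a+L) ≤ mu L + (Nat.log 2 L + 1) := by
  intro L
  induction L using Nat.strong_induction_on with
  | _ L ih =>
    intro a
    match L, ih with
    | 0, _ => simp [mu, cnt_of_le]
    | 1, _ =>
        have h1 := cnt_le_len (ne2 T) a (a+1)
        have h2 : mu 1 = 1 := by simp [mu]
        omega
    | (m+2), ih =>
        set L := m + 2 with hL
        have hrec := uu_rec T hTe hTo (show a ≤ a + L by omega)
        set O := (a+L)/2 - a/2 with hO
        have hO1 : (a+L)/2 = a/2 + O := by omega
        have hO2 : L/2 ≤ O ∧ O ≤ (L+1)/2 := by omega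
        rw [hO1] at hrec
        have hOL : O < L := by omega
        have ihO := ih O hOL (a/2)
        have hmueq := mu_eq (show 2 ≤ L by omega)
        have hmuleC := mu_le ((L+1)/2)
        have hmuleO := mu_le O
        have hlog1 : Nat.log 2 O ≤ Nat.log 2 L := Nat.log_mono_right (by omega)
        have hcnt_le := cnt_le_len (ne2 T) a (a+L)
        have hcnt_le2 := cnt_le_len (ne2 T) (a/2) (a/2 + O)
        -- relation between mu O and mu ((L+1)/2)
        rcases (show O = (L+1)/2 ∨ O + 1 = (L+1)/2 by omega) with hc | hc
        · have hmm : mu O = mu ((L+1)/2) := by rw [hc]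
          omega
        · have hlip := mu_lip O
          have hmono : mu O ≤ mu ((L+1)/2) := mu_mono (by omega)
          have hlog2 : Nat.log 2 O + 1 ≤ Nat.log 2 L := by
            have hdb : Nat.log 2 (L/2) = Nat.log 2 L - 1 := Nat.log_div_base 2 L
            have hpos : 0 < Nat.log 2 L := Nat.log_pos (by norm_num) (by omega)
            have : Nat.log 2 O ≤ Nat.log 2 (L/2) := Nat.log_mono_right (by omega)
            omega
          rw [← hc] at hmueq
          omega

end Part2A

section Part2B

lemma pc_tele (T : ℕ → Bool) {a b : ℕ} (h : a ≤ b) :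
    pc T true false a b + (if T b then 1 else 0)
      = pc T false true a b + (if T a then 1 else 0) := by
  have h1 := cnt_tele T h
  have e1 : cnt (fun p => T p && !T (p+1)) a b = pc T true false a b := by
    apply cnt_congr; intro p
    rcases hp : T p <;> rcases hq : T (p+1) <;> simp [hp, hq]
  have e2 : cnt (fun p => !T p && T (p+1)) a b = pc T false true a b := by
    apply cnt_congr; intro p
    rcases hp : T p <;> rcases hq : T (p+1) <;> simp [hp, hq]
  rw [e1, e2] at h1
  exact h1

lemma pc_total (T : ℕ → Bool) (a b : ℕ) :
    pc T false false a b + pc T false true a b + pc T true false a b + pc T true true a b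
      = b - a := by
  have h1 := cnt_not (fun p => T p == false) a b
  have e1 : cnt (fun p => !(T p == false)) a b = cnt (fun p => T p == true) a b := by
    apply cnt_congr; intro p; rcases hp : T p <;> simp [hp]
  have e2 := lc_split T false a b
  have e3 := lc_split T true a b
  rw [e1] at h1
  omega

lemma ne2_split (T : ℕ → Bool) (a b : ℕ) :
    cnt (ne2 T) a b = pc T true false a b + pc T false true a b := by
  rw [cnt_split (ne2 T) (fun p => T p) a b]
  congr 1
  · apply cnt_congr; intro p
    simp only [ne2]
    rcases hp : T p <;> rcases hq : T (p+1) <;> simp [hp, hq]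
  · apply cnt_congr; intro p
    simp only [ne2]
    rcases hp : T p <;> rcases hq : T (p+1) <;> simp [hp, hq]

/-- the compressed tuple for part 2 -/
def g2 (T : ℕ → Bool) (n i : ℕ) : Bool × Bool × Bool × Bool × ℕ :=
  (T i, T (i+(n-1)), T (i/2), T ((i+(n-1))/2), pc T true false (i/2) ((i+(n-1))/2))

lemma det2 (T : ℕ → Bool) (hTe : ∀ n, T (2 * n) = T n) (hTo : ∀ n, T (2 * n + 1) = !T n)
    (n i j : ℕ) (h : g2 T n i = g2 T n j) : gtuple T n i = gtuple T n j := by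
  simp only [g2, Prod.mk.injEq] at h
  obtain ⟨e1, e2, e3, e4, e5⟩ := h
  have ia := pc_ff T hTe hTo i (i+(n-1))
  have ib := pc_tt T hTe hTo i (i+(n-1))
  have ic := pc_tele T (show i/2 ≤ (i+(n-1))/2 by omega)
  have id := pc_total T i (i+(n-1))
  have ie := pc_tele T (show i ≤ i+(n-1) by omega)
  have ja := pc_ff T hTe hTo j (j+(n-1))
  have jb := pc_tt T hTe hTo j (j+(n-1))
  have jc := pc_tele T (show j/2 ≤ (j+(n-1))/2 by omega)
  have jd := pc_total T j (j+(n-1))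
  have je := pc_tele T (show j ≤ j+(n-1) by omega)
  have harith1 : i + (n-1) - i = n - 1 := by omega
  have harith2 : j + (n-1) - j = n - 1 := by omega
  rw [harith1] at id
  rw [harith2] at jd
  simp only [gtuple, Prod.mk.injEq]
  refine ⟨e1, e2, ?_⟩
  rw [← e3, ← e4, ← e5] at jc
  rw [← e1, ← e2] at je
  rcases hb1 : T i <;> rcases hb2 : T (i+(n-1)) <;>
    rcases hb3 : T (i/2) <;> rcases hb4 : T ((i+(n-1))/2) <;>
    simp only [hb1, hb2, hb3, hb4, if_true, if_false] at ic ie jc je <;>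
    simp at ic ie jc je <;>
    omega

end Part2B

section Final

lemma s1_bounds (T : ℕ → Bool) (hTe : ∀ n, T (2 * n) = T n) (hTo : ∀ n, T (2 * n + 1) = !T n)
    (M G : ℕ) (hlog : Nat.log 2 ((M+1)/2) ≤ G) (i : ℕ) :
    (mu (M/2) - (G + 2)) / 2 ≤ pc T true false (i/2) ((i+M)/2)
    ∧ pc T true false (i/2) ((i+M)/2) ≤ (mu ((M+1)/2) + (G + 2)) / 2 + 1 := by
  set w1 := i/2 with hw1
  set w2 := (i+M)/2 with hw2
  set O := w2 - w1 with hOdef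
  have hO1 : w2 = w1 + O := by omega
  have hO2 : M/2 ≤ O ∧ O ≤ (M+1)/2 := by omega
  have hsplit := ne2_split T w1 w2
  have htele := pc_tele T (show w1 ≤ w2 by omega)
  have htele2 : pc T true false w1 w2 ≤ pc T false true w1 w2 + 1
      ∧ pc T false true w1 w2 ≤ pc T true false w1 w2 + 1 := by
    rcases hb1 : T w1 <;> rcases hb2 : T w2 <;> simp [hb1, hb2] at htele <;> omega
  have hub := ubound T hTe hTo O w1
  rw [← hO1] at hub
  have hm1 : mu (M/2) ≤ mu O := mu_mono (by omega)
  have hm2 : mu O ≤ mu ((M+1)/2) := mu_mono (by omega)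
  have hl : Nat.log 2 O ≤ G := le_trans (Nat.log_mono_right (by omega)) hlog
  omega

lemma part2nat (T : ℕ → Bool) (hTe : ∀ n, T (2 * n) = T n) (hTo : ∀ n, T (2 * n + 1) = !T n)
    (n : ℕ) (hn : 1 ≤ n) : rho 2 T n ≤ 16 * (Nat.log 2 n + 6) := by
  classical
  set M := n - 1 with hM
  set G := Nat.log 2 n with hG
  set lo := (mu (M/2) - (G + 2)) / 2 with hlo
  set hi := (mu ((M+1)/2) + (G + 2)) / 2 + 1 with hhi
  set F2 : Finset (Bool × Bool × Bool × Bool × ℕ) :=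
    Finset.univ ×ˢ Finset.univ ×ˢ Finset.univ ×ˢ Finset.univ ×ˢ Finset.Icc lo hi with hF2
  have hlogle : Nat.log 2 ((M+1)/2) ≤ G := by
    rw [hG]
    exact Nat.log_mono_right (by omega)
  have hmem : ∀ i, g2 T n i ∈ F2 := by
    intro i
    have hb := s1_bounds T hTe hTo M G hlogle i
    have hMn : n - 1 = M := rfl
    simp only [g2, hF2, Finset.mem_product, Finset.mem_univ, true_and, Finset.mem_Icc, hMn]
    exact ⟨hb.1, hb.2⟩
  have hcard : F2.card = 16 * (hi + 1 - lo) := by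
    rw [hF2]
    simp [Finset.card_product, Nat.card_Icc]
    ring
  have hlip : mu ((M+1)/2) ≤ mu (M/2) + 1 := by
    rcases (show (M+1)/2 = M/2 ∨ (M+1)/2 = M/2 + 1 by omega) with h | h
    · rw [h]; exact Nat.le_succ _
    · rw [h]; exact (mu_lip (M/2)).2
  have hIcc : hi + 1 - lo ≤ G + 6 := by omega
  calc rho 2 T n ≤ F2.card :=
        rho_le T hn (g2 T n) (fun i j h => det2 T hTe hTo n i j h) F2 hmem
    _ = 16 * (hi + 1 - lo) := hcard
    _ ≤ 16 * (G + 6) := by omega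

theorem stmt13' (T : ℕ → Bool)
    (hT0 : T 0 = false) (hTe : ∀ n, T (2 * n) = T n) (hTo : ∀ n, T (2 * n + 1) = !T n) :
    (∀ m : ℕ, rho 2 T (2 ^ m + 1) ≤ 8) ∧
    (∃ C : ℝ, ∀ n : ℕ, 1 ≤ n → (rho 2 T n : ℝ) ≤ C * Real.log (n + 1)) := by
  constructor
  · exact part1 T hTe hTo
  · refine ⟨112 / Real.log 2, ?_⟩
    intro n hn
    have h1 : rho 2 T n ≤ 16 * (Nat.log 2 n + 6) := part2nat T hTe hTo n hn
    have hlog2pos : (0:ℝ) < Real.log 2 := Real.log_pos (by norm_num)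
    have hn1 : (1:ℝ) ≤ (n:ℝ) := by exact_mod_cast hn
    have hmain : (Nat.log 2 n : ℝ) * Real.log 2 ≤ Real.log ((n:ℝ) + 1) := by
      have hpow : (2:ℕ) ^ (Nat.log 2 n) ≤ n := Nat.pow_log_le_self 2 (by omega)
      have hpow' : ((2:ℝ)) ^ (Nat.log 2 n) ≤ (n:ℝ) := by exact_mod_cast hpow
      calc (Nat.log 2 n : ℝ) * Real.log 2 = Real.log ((2:ℝ) ^ (Nat.log 2 n)) := by
            rw [Real.log_pow]
        _ ≤ Real.log (n:ℝ) := Real.log_le_log (by positivity) hpow'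
        _ ≤ Real.log ((n:ℝ) + 1) := Real.log_le_log (by linarith) (by linarith)
    have h2 : Real.log 2 ≤ Real.log ((n:ℝ) + 1) :=
      Real.log_le_log (by norm_num) (by linarith)
    have hcast : (rho 2 T n : ℝ) ≤ 16 * (Nat.log 2 n : ℝ) + 96 := by
      have : (rho 2 T n : ℝ) ≤ ((16 * (Nat.log 2 n + 6) : ℕ) : ℝ) := by exact_mod_cast h1
      push_cast at this
      linarith
    rw [div_mul_eq_mul_div, le_div_iff₀ hlog2pos]
    nlinarith [mul_le_mul_of_nonneg_right hcast hlog2pos.le, hmain, h2]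

end Final

theorem stmt13 (T : ℕ → Bool)
    (hT0 : T 0 = false) (hTe : ∀ n, T (2 * n) = T n) (hTo : ∀ n, T (2 * n + 1) = !T n) :
    (∀ m : ℕ, rho 2 T (2 ^ m + 1) ≤ 8) ∧
    (∃ C : ℝ, ∀ n : ℕ, 1 ≤ n → (rho 2 T n : ℝ) ≤ C * Real.log (n + 1)) := by
  exact stmt13' T hT0 hTe hTo
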